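/- Let f : F₂' → ℤ be a signed-area homomorphism. Let n ≥ 2 and let z ∈ F₂' be a product of n-th powers in F₂, i.e. z = u₁^n u₂^n ⋯ u_s^n for some s ≥ 1 and u₁, …, u_s ∈ F₂. If n is odd then n divides f(z); if n is even then n/2 divides f(z). -/

import Mathlib

open scoped commutatorElement

@[ext]
structure Heis (R : Type) [CommRing R] where
  a : R
  b : R
  c : R

namespace Heis
variable {R : Type} [CommRing R]

instance : Mul (Heis R) := ⟨fun g h => ⟨g.a + h.a, g.b + h.b, g.c + h.c + g.a * h.b⟩⟩
instance : One (Heis R) := ⟨⟨0, 0, 0⟩⟩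
instance : Inv (Heis R) := ⟨fun g => ⟨-g.a, -g.b, -g.c + g.a * g.b⟩⟩

@[simp] lemma mul_a (g h : Heis R) : (g * h).a = g.a + h.a := rfl
@[simp] lemma mul_b (g h : Heis R) : (g * h).b = g.b + h.b := rfl
@[simp] lemma mul_c (g h : Heis R) : (g * h).c = g.c + h.c + g.a * h.b := rfl
@[simp] lemma one_a : (1 : Heis R).a = 0 := rfl
@[simp] lemma one_b : (1 : Heis R).b = 0 := rfl
@[simp] lemma one_c : (1 : Heis R).c = 0 := rfl
@[simp] lemma inv_a (g : Heis R) : (g⁻¹).a = -g.a := rfl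
@[simp] lemma inv_b (g : Heis R) : (g⁻¹).b = -g.b := rfl
@[simp] lemma inv_c (g : Heis R) : (g⁻¹).c = -g.c + g.a * g.b := rfl

instance : Group (Heis R) where
  mul_assoc g h k := by ext <;> simp <;> ring
  one_mul g := by ext <;> simp
  mul_one g := by ext <;> simp
  inv_mul_cancel g := by ext <;> simp <;> ring

lemma pow_eq (g : Heis R) (n : ℕ) :
    g ^ n = ⟨(n : R) * g.a, (n : R) * g.b, (n : R) * g.c + (n.choose 2 : R) * (g.a * g.b)⟩ := by
  induction n with
  | zero => ext <;> simp
  | succ m ih =>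
    rw [pow_succ, ih]
    ext <;> simp [Nat.choose_succ_succ, Nat.choose_one_right] <;> push_cast <;> ring

/-- projection onto the `a` coordinate, as a monoid hom. -/
def projA : Heis R →* Multiplicative R where
  toFun g := Multiplicative.ofAdd g.a
  map_one' := rfl
  map_mul' _ _ := congrArg Multiplicative.ofAdd rfl

def projB : Heis R →* Multiplicative R where
  toFun g := Multiplicative.ofAdd g.b
  map_one' := rfl
  map_mul' _ _ := congrArg Multiplicative.ofAdd rfl

/-- reduction mod k -/
def castHom (k : ℕ) : Heis ℤ →* Heis (ZMod k) where
  toFun g := ⟨(g.a : ZMod k), (g.b : ZMod k), (g.c : ZMod k)⟩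
  map_one' := by ext <;> simp
  map_mul' g h := by ext <;> push_cast <;> simp

lemma central (t : R) (g : Heis R) : g * ⟨0, 0, t⟩ * g⁻¹ = ⟨0, 0, t⟩ := by
  ext <;> simp <;> ring

end Heis

abbrev F2 := FreeGroup (Fin 2)

noncomputable def phi : F2 →* Heis ℤ :=
  FreeGroup.lift ![⟨1, 0, 0⟩, ⟨0, 1, 0⟩]

lemma phi_comm : phi ⁅FreeGroup.of (0 : Fin 2), FreeGroup.of (1 : Fin 2)⁆ = ⟨0, 0, 1⟩ := by
  simp only [commutatorElement_def, map_mul, map_inv, phi, FreeGroup.lift_apply_of]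
  ext <;> simp

lemma phi_ab_zero {w : F2} (hw : w ∈ commutator F2) :
    (phi w).a = 0 ∧ (phi w).b = 0 := by
  have ha := Abelianization.commutator_subset_ker (Heis.projA.comp phi) hw
  have hb := Abelianization.commutator_subset_ker (Heis.projB.comp phi) hw
  simp only [MonoidHom.mem_ker, MonoidHom.comp_apply] at ha hb
  exact ⟨congrArg Multiplicative.toAdd ha, congrArg Multiplicative.toAdd hb⟩

/-- the area homomorphism on the commutator subgroup -/
noncomputable def area : ↥(commutator F2) →* Multiplicative ℤ where
  toFun w := Multiplicative.ofAdd (phi (w : F2)).c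
  map_one' := by simp
  map_mul' w v := by
    have := (phi_ab_zero w.2).1
    simp only [Subgroup.coe_mul, map_mul, Heis.mul_c, this, zero_mul, add_zero, ← ofAdd_add]

lemma mem_centralizer_single {G : Type*} [Group G] {g q : G} (h : Commute g q) :
    q ∈ Subgroup.centralizer {g} :=
  Subgroup.mem_centralizer_iff.mpr (by rintro s rfl; exact h.eq)

lemma comm_le_ncl :
    commutator F2 ≤
      Subgroup.normalClosure {⁅FreeGroup.of (0 : Fin 2), FreeGroup.of (1 : Fin 2)⁆} := by
  set c₀ := ⁅FreeGroup.of (0 : Fin 2), FreeGroup.of (1 : Fin 2)⁆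
  set N := Subgroup.normalClosure {c₀}
  rw [commutator, Subgroup.commutator_le]
  intro g _ h _
  let π : F2 →* F2 ⧸ N := QuotientGroup.mk' N
  have hgen : ∀ q : F2 ⧸ N, q ∈ Subgroup.closure {π (FreeGroup.of 0), π (FreeGroup.of 1)} := by
    intro q
    obtain ⟨w, rfl⟩ := QuotientGroup.mk'_surjective N q
    have h1 : Subgroup.closure (Set.range (FreeGroup.of : Fin 2 → F2)) = ⊤ :=
      FreeGroup.closure_range_of (Fin 2)
    have hw : w ∈ Subgroup.closure (Set.range (FreeGroup.of : Fin 2 → F2)) := by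
      rw [h1]; trivial
    have h2 : π w ∈ Subgroup.map π (Subgroup.closure (Set.range (FreeGroup.of : Fin 2 → F2))) :=
      Subgroup.mem_map_of_mem π hw
    rw [MonoidHom.map_closure] at h2
    refine Subgroup.closure_mono ?_ h2
    rintro _ ⟨_, ⟨i, rfl⟩, rfl⟩
    fin_cases i <;> simp
  have hxy : Commute (π (FreeGroup.of 0)) (π (FreeGroup.of 1)) := by
    rw [← commutatorElement_eq_one_iff_commute, ← map_commutatorElement,
      ← MonoidHom.mem_ker, QuotientGroup.ker_mk']
    exact Subgroup.subset_normalClosure rfl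
  have pair_le : ∀ g₀ : F2 ⧸ N, Commute g₀ (π (FreeGroup.of 0)) →
      Commute g₀ (π (FreeGroup.of 1)) → ∀ q : F2 ⧸ N, Commute g₀ q := by
    intro g₀ h0 h1 q
    have : q ∈ Subgroup.centralizer {g₀} := by
      refine (Subgroup.closure_le _).2 ?_ (hgen q)
      rintro r (rfl | rfl)
      · exact mem_centralizer_single h0
      · exact mem_centralizer_single h1
    exact (commute_iff_eq _ _).mpr (Subgroup.mem_centralizer_iff.mp this _ rfl)
  have h1 : ∀ q : F2 ⧸ N, Commute (π (FreeGroup.of 0)) q :=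
    pair_le _ (Commute.refl _) hxy
  have h2 : ∀ q : F2 ⧸ N, Commute (π (FreeGroup.of 1)) q :=
    pair_le _ hxy.symm (Commute.refl _)
  have key : ∀ q r : F2 ⧸ N, Commute q r := fun q r =>
    pair_le q (h1 q).symm (h2 q).symm r
  have : π ⁅g, h⁆ = 1 := by
    rw [map_commutatorElement, commutatorElement_eq_one_iff_commute]
    exact key _ _
  rwa [← MonoidHom.mem_ker, QuotientGroup.ker_mk'] at this

lemma ncl_le_comm :
    Subgroup.normalClosure {⁅FreeGroup.of (0 : Fin 2), FreeGroup.of (1 : Fin 2)⁆} ≤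
      commutator F2 := by
  apply Subgroup.normalClosure_le_normal
  rintro x rfl
  exact Subgroup.commutator_mem_commutator (Subgroup.mem_top _) (Subgroup.mem_top _)

lemma hom_eq_area (f : ↥(commutator F2) →* Multiplicative ℤ)
    (hf : ∀ (u : F2) (w : ↥(commutator F2)),
      (w : F2) = u * ⁅FreeGroup.of (0 : Fin 2), FreeGroup.of (1 : Fin 2)⁆ * u⁻¹ →
      f w = Multiplicative.ofAdd (1 : ℤ)) :
    ∀ w, f w = area w := by
  set c₀ := ⁅FreeGroup.of (0 : Fin 2), FreeGroup.of (1 : Fin 2)⁆ with hc₀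
  have hdef : Subgroup.normalClosure {c₀} =
      Subgroup.closure (Group.conjugatesOfSet ({c₀} : Set F2)) := rfl
  suffices H : ∀ x (hx : x ∈ Subgroup.closure (Group.conjugatesOfSet ({c₀} : Set F2))),
      ∀ h : x ∈ commutator F2, f ⟨x, h⟩ = area ⟨x, h⟩ by
    intro w
    have := H w (hdef ▸ comm_le_ncl w.2) w.2
    simpa using this
  intro x hx
  induction hx using Subgroup.closure_induction with
  | mem y hy =>
    intro h
    rw [Group.mem_conjugatesOfSet_iff] at hy
    obtain ⟨a, ha, hconj⟩ := hy
    rw [Set.mem_singleton_iff] at ha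
    subst ha
    obtain ⟨u, hu⟩ := isConj_iff.mp hconj
    have harea : area ⟨y, h⟩ = Multiplicative.ofAdd (1 : ℤ) := by
      show Multiplicative.ofAdd (phi y).c = _
      rw [← hu, map_mul, map_mul, map_inv, phi_comm, Heis.central]
    rw [hf u ⟨y, h⟩ hu.symm, harea]
  | one =>
    intro h
    have h1 : (⟨1, h⟩ : ↥(commutator F2)) = 1 := rfl
    rw [h1, map_one, map_one]
  | mul p q hp hq ihp ihq =>
    intro h
    have hp' : p ∈ commutator F2 := ncl_le_comm (hdef ▸ hp)
    have hq' : q ∈ commutator F2 := ncl_le_comm (hdef ▸ hq)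
    have : (⟨p * q, h⟩ : ↥(commutator F2)) = ⟨p, hp'⟩ * ⟨q, hq'⟩ := rfl
    rw [this, map_mul, map_mul, ihp hp', ihq hq']
  | inv p hp ihp =>
    intro h
    have hp' : p ∈ commutator F2 := ncl_le_comm (hdef ▸ hp)
    have : (⟨p⁻¹, h⟩ : ↥(commutator F2)) = (⟨p, hp'⟩)⁻¹ := rfl
    rw [this, map_inv, map_inv, ihp hp']

lemma key_dvd (n : ℕ) (k : ℕ) (hk0 : k ≠ 0) (hkn : k ∣ n) (hkc : k ∣ n.choose 2)
    (z : ↥(commutator F2)) (L : List F2)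
    (hz : (z : F2) = (L.map (fun u => u ^ n)).prod) :
    (k : ℤ) ∣ (phi (z : F2)).c := by
  haveI : NeZero k := ⟨hk0⟩
  set ψ : F2 →* Heis (ZMod k) := (Heis.castHom k).comp phi with hψ
  have h1 : ψ (z : F2) = 1 := by
    rw [hz, map_list_prod, List.map_map]
    apply List.prod_eq_one
    intro g hg
    rw [List.mem_map] at hg
    obtain ⟨u, _, rfl⟩ := hg
    show ψ (u ^ n) = 1
    rw [map_pow, Heis.pow_eq]
    have e1 : ((n : ℕ) : ZMod k) = 0 := (ZMod.natCast_eq_zero_iff n k).mpr hkn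
    have e2 : ((n.choose 2 : ℕ) : ZMod k) = 0 :=
      (ZMod.natCast_eq_zero_iff _ k).mpr hkc
    ext <;> simp [e1, e2]
  have h2 : (((phi (z : F2)).c : ℤ) : ZMod k) = 0 := by
    have := congrArg Heis.c h1
    simpa [hψ, Heis.castHom] using this
  exact (ZMod.intCast_zmod_eq_zero_iff_dvd _ k).mp h2

theorem stmt_13
    (f : ↥(commutator (FreeGroup (Fin 2))) →* Multiplicative ℤ)
    (hf : ∀ (u : FreeGroup (Fin 2)) (w : ↥(commutator (FreeGroup (Fin 2)))),
      (w : FreeGroup (Fin 2)) =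
          u * ⁅FreeGroup.of (0 : Fin 2), FreeGroup.of (1 : Fin 2)⁆ * u⁻¹ →
      f w = Multiplicative.ofAdd (1 : ℤ))
    (n : ℕ) (hn : 2 ≤ n)
    (z : ↥(commutator (FreeGroup (Fin 2))))
    (L : List (FreeGroup (Fin 2))) (hL : L ≠ [])
    (hz : (z : FreeGroup (Fin 2)) = (L.map (fun u => u ^ n)).prod) :
    (Odd n → (n : ℤ) ∣ Multiplicative.toAdd (f z)) ∧
    (Even n → ((n / 2 : ℕ) : ℤ) ∣ Multiplicative.toAdd (f z)) := by
  have hfz : Multiplicative.toAdd (f z) = (phi (z : F2)).c := by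
    rw [hom_eq_area f hf z]
    rfl
  rw [hfz]
  constructor
  · rintro ⟨m, hm⟩
    refine key_dvd n n (by omega) dvd_rfl ?_ z L hz
    refine ⟨m, ?_⟩
    rw [Nat.choose_two_right]
    have h2 : n * (n - 1) = 2 * (n * m) := by
      have : n - 1 = 2 * m := by omega
      rw [this]; ring
    rw [h2, Nat.mul_div_cancel_left _ two_pos]
  · rintro ⟨m, hm⟩
    have hnm : n = 2 * m := by omega
    have hm2 : n / 2 = m := by omega
    rw [hm2]
    refine key_dvd n m (by omega) ⟨2, by omega⟩ ?_ z L hz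
    refine ⟨2 * m - 1, ?_⟩
    rw [Nat.choose_two_right, hnm]
    have h2 : 2 * m * (2 * m - 1) = 2 * (m * (2 * m - 1)) := by ring
    rw [h2, Nat.mul_div_cancel_left _ two_pos]
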